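/- Let E ⊆ M^+(X). Then the following assertions are equivalent: (i) M_1(E) = AM(E); (ii) M_1(E) = lim_{i→∞} M_1(E_i) for every increasing sequence E_1 ⊆ E_2 ⊆ … of subsets of M^+(X) with ∪_i E_i = E. -/

import Mathlib

open MeasureTheory Filter Topology BoundedContinuousFunction ENNReal NNReal

noncomputable section

namespace AMPaper

variable (X : Type*) [TopologicalSpace X] [MeasurableSpace X]

/-- The topology `τ_b` on the space of finite nonnegative Borel measures:
the weak topology induced by the pairings `μ ↦ ∫ g dμ`, `g ∈ C_b(X)`. -/
def taub : TopologicalSpace (FiniteMeasure X) :=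
  ⨅ g : X →ᵇ ℝ,
    TopologicalSpace.induced (fun μ : FiniteMeasure X => ∫ x, g x ∂(μ : Measure X)) inferInstance

/-- The topology `τ_A` induced by the pairings with functions from `A ⊆ C_b(X)`. -/
def tauA (A : Set (X →ᵇ ℝ)) : TopologicalSpace (FiniteMeasure X) :=
  ⨅ g ∈ A,
    TopologicalSpace.induced (fun μ : FiniteMeasure X => ∫ x, g x ∂(μ : Measure X)) inferInstance

variable {X}

/-- A closed linear sublattice of `C_b(X)`. -/
structure IsClosedSublattice (A : Set (X →ᵇ ℝ)) : Prop where
  isClosed : IsClosed A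
  zero_mem : (0 : X →ᵇ ℝ) ∈ A
  add_mem : ∀ ⦃f g : X →ᵇ ℝ⦄, f ∈ A → g ∈ A → f + g ∈ A
  smul_mem : ∀ (c : ℝ) ⦃f : X →ᵇ ℝ⦄, f ∈ A → c • f ∈ A
  sup_mem : ∀ ⦃f g h : X →ᵇ ℝ⦄, f ∈ A → g ∈ A → (∀ x, h x = max (f x) (g x)) → h ∈ A
  inf_mem : ∀ ⦃f g h : X →ᵇ ℝ⦄, f ∈ A → g ∈ A → (∀ x, h x = min (f x) (g x)) → h ∈ A

/-- An acceptable subspace of `C_b(X)`: a closed linear sublattice satisfying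
the separation property (A2). -/
structure IsAcceptable (A : Set (X →ᵇ ℝ)) extends IsClosedSublattice A : Prop where
  sep : ∀ F : Set X, IsClosed F → ∀ x ∉ F, ∃ g ∈ A,
    (∀ y, 0 ≤ g y) ∧ (∀ y, g y ≤ 1) ∧ g x = 1 ∧ ∀ y ∈ F, g y = 0

/-- A lower semicontinuous `ρ : X → [0,∞]` is admissible for `E` if `∫ ρ dμ ≥ 1` for all `μ ∈ E`. -/
def AdmissibleFun (ρ : X → ℝ≥0∞) (E : Set (FiniteMeasure X)) : Prop :=
  LowerSemicontinuous ρ ∧ ∀ μ ∈ E, 1 ≤ ∫⁻ x, ρ x ∂(μ : Measure X)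

/-- The `M_p` modulus of a family of measures. -/
def Mmod (p : ℝ) (m : Measure X) (E : Set (FiniteMeasure X)) : ℝ≥0∞ :=
  ⨅ (ρ : X → ℝ≥0∞) (_ : AdmissibleFun ρ E), ∫⁻ x, ρ x ^ p ∂m

/-- The continuous modulus `M_{p,c}^A`, with test functions nonnegative elements of `A`. -/
def McMod (p : ℝ) (A : Set (X →ᵇ ℝ)) (m : Measure X) (E : Set (FiniteMeasure X)) : ℝ≥0∞ :=
  ⨅ (g : X →ᵇ ℝ) (_ : g ∈ A ∧ (∀ x, 0 ≤ g x) ∧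
      ∀ μ ∈ E, 1 ≤ ∫⁻ x, ENNReal.ofReal (g x) ∂(μ : Measure X)),
    ∫⁻ x, ENNReal.ofReal (g x) ^ p ∂m

/-- A sequence of lower semicontinuous functions `ρ_j : X → [0,∞]` is an admissible sequence
for `E` if `liminf_j ∫ ρ_j dμ ≥ 1` for all `μ ∈ E`. -/
def AdmissibleSeq (ρ : ℕ → X → ℝ≥0∞) (E : Set (FiniteMeasure X)) : Prop :=
  (∀ j, LowerSemicontinuous (ρ j)) ∧
    ∀ μ ∈ E, 1 ≤ Filter.liminf (fun j => ∫⁻ x, ρ j x ∂(μ : Measure X)) Filter.atTop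

/-- The approximation modulus `AM_p` of a family of measures. -/
def AMmod (p : ℝ) (m : Measure X) (E : Set (FiniteMeasure X)) : ℝ≥0∞ :=
  ⨅ (ρ : ℕ → X → ℝ≥0∞) (_ : AdmissibleSeq ρ E),
    Filter.liminf (fun j => ∫⁻ x, ρ j x ^ p ∂m) Filter.atTop

/-- The continuous approximation modulus `AM_{p,c}^A`. -/
def AMcMod (p : ℝ) (A : Set (X →ᵇ ℝ)) (m : Measure X) (E : Set (FiniteMeasure X)) : ℝ≥0∞ :=
  ⨅ (g : ℕ → X →ᵇ ℝ) (_ : (∀ j, g j ∈ A ∧ ∀ x, 0 ≤ g j x) ∧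
      ∀ μ ∈ E, 1 ≤ Filter.liminf
        (fun j => ∫⁻ x, ENNReal.ofReal (g j x) ∂(μ : Measure X)) Filter.atTop),
    Filter.liminf (fun j => ∫⁻ x, ENNReal.ofReal (g j x) ^ p ∂m) Filter.atTop

/-- The `L^q(m)`-norm of a function `f : X → [0,∞]`. -/
def lqNorm (q : ℝ≥0∞) (m : Measure X) (f : X → ℝ≥0∞) : ℝ≥0∞ :=
  if q = ∞ then essSup f m else (∫⁻ x, f x ^ q.toReal ∂m) ^ (1 / q.toReal)

variable (X) in
/-- The `p`-content (depending on `p` only through the conjugate exponent `q`):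
the supremum of the outer measures `η*(E)` over all plans `η` — finite Borel measures on
`(M^+(X), τ_b)` — whose barycenter `η^#` is absolutely continuous w.r.t. `m` with density
of `L^q(m)`-norm at most `1`. -/
def Ct (q : ℝ≥0∞) (m : Measure X) (E : Set (FiniteMeasure X)) : ℝ≥0∞ :=
  ⨆ (η : @Measure (FiniteMeasure X) (@borel (FiniteMeasure X) (taub X)))
    (_ : η Set.univ < ∞ ∧ ∃ f : X → ℝ≥0∞, Measurable f ∧
      (∀ B : Set X, MeasurableSet B → (∫⁻ μ, (μ : Measure X) B ∂η) = ∫⁻ x in B, f x ∂m) ∧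
      lqNorm q m f ≤ 1),
    η E


lemma Mmod_le' {X : Type*} [TopologicalSpace X] [MeasurableSpace X] (p : ℝ) (m : Measure X)
    {E : Set (FiniteMeasure X)} {ρ : X → ℝ≥0∞} (h : AdmissibleFun ρ E) :
    Mmod p m E ≤ ∫⁻ x, ρ x ^ p ∂m := iInf₂_le ρ h

lemma AMmod_le' {X : Type*} [TopologicalSpace X] [MeasurableSpace X] (p : ℝ) (m : Measure X)
    {E : Set (FiniteMeasure X)} {ρ : ℕ → X → ℝ≥0∞} (h : AdmissibleSeq ρ E) :
    AMmod p m E ≤ Filter.liminf (fun j => ∫⁻ x, ρ j x ^ p ∂m) Filter.atTop := iInf₂_le ρ h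

lemma Mmod_mono' {X : Type*} [TopologicalSpace X] [MeasurableSpace X] (p : ℝ) (m : Measure X)
    {E E' : Set (FiniteMeasure X)} (h : E ⊆ E') : Mmod p m E ≤ Mmod p m E' :=
  le_iInf₂ fun ρ hρ => iInf₂_le ρ ⟨hρ.1, fun μ hμ => hρ.2 μ (h hμ)⟩

theorem stmt11 {X : Type*} [TopologicalSpace X] [PolishSpace X] [MeasurableSpace X] [BorelSpace X]
    (m : Measure X) [IsFiniteMeasureOnCompacts m] [m.InnerRegular]
    (E : Set (FiniteMeasure X)) :
    Mmod 1 m E = AMmod 1 m E ↔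
      ∀ F : ℕ → Set (FiniteMeasure X), Monotone F → (⋃ i, F i) = E →
        Mmod 1 m E = ⨆ i, Mmod 1 m (F i) := by
  constructor
  · -- (i) → (ii)
    intro hMA F hmono hunion
    refine le_antisymm ?_ (iSup_le fun i => Mmod_mono' 1 m (hunion ▸ Set.subset_iUnion F i))
    rcases eq_top_or_lt_top (⨆ i, Mmod 1 m (F i)) with htop | hfin
    · rw [htop]; exact le_top
    rw [hMA]
    refine ENNReal.le_of_forall_pos_le_add fun ε hε _ => ?_
    have hFfin : ∀ i, Mmod 1 m (F i) < ∞ := fun i =>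
      lt_of_le_of_lt (le_iSup (fun i => Mmod 1 m (F i)) i) hfin
    have hsel : ∀ i, ∃ ρ : X → ℝ≥0∞, AdmissibleFun ρ (F i) ∧
        ∫⁻ x, ρ x ^ (1 : ℝ) ∂m ≤ Mmod 1 m (F i) + ε := by
      intro i
      have h1 : Mmod 1 m (F i) < Mmod 1 m (F i) + ε :=
        ENNReal.lt_add_right (hFfin i).ne (by exact_mod_cast hε.ne')
      clear hFfin
      conv_lhs at h1 => rw [Mmod]
      obtain ⟨ρ, hρ⟩ := iInf_lt_iff.1 h1
      obtain ⟨hadm, hlt⟩ := iInf_lt_iff.1 hρ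
      exact ⟨ρ, hadm, hlt.le⟩
    choose ρ hρadm hρint using hsel
    have hseq : AdmissibleSeq ρ E := by
      refine ⟨fun j => (hρadm j).1, fun μ hμ => ?_⟩
      have hμE : μ ∈ ⋃ i, F i := hunion ▸ hμ
      obtain ⟨i0, hi0⟩ := Set.mem_iUnion.1 hμE
      rw [Filter.liminf_eq_iSup_iInf_of_nat]
      refine le_iSup_of_le i0 (le_iInf₂ fun j hj => (hρadm j).2 μ (hmono hj hi0))
    calc AMmod 1 m E ≤ Filter.liminf (fun j => ∫⁻ x, ρ j x ^ (1 : ℝ) ∂m) Filter.atTop :=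
          AMmod_le' 1 m hseq
      _ ≤ (⨆ i, Mmod 1 m (F i)) + ε := by
          rw [Filter.liminf_eq_iSup_iInf_of_nat]
          refine iSup_le fun n => le_trans (iInf₂_le n le_rfl) ?_
          exact le_trans (hρint n)
            (add_le_add_left (le_iSup (fun i => Mmod 1 m (F i)) n) _)
  · -- (ii) → (i)
    intro h
    have hAM_le : AMmod 1 m E ≤ Mmod 1 m E := by
      unfold Mmod
      refine le_iInf₂ fun ρ hρ => ?_
      have hseq : AdmissibleSeq (fun _ => ρ) E :=
        ⟨fun _ => hρ.1, fun μ hμ => by rw [Filter.liminf_const]; exact hρ.2 μ hμ⟩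
      exact (AMmod_le' 1 m hseq).trans (by rw [Filter.liminf_const])
    refine le_antisymm ?_ hAM_le
    unfold AMmod
    refine le_iInf₂ fun ρ hρ => ?_
    -- goal: Mmod 1 m E ≤ liminf ∫ ρ j ^ 1 dm
    refine ENNReal.le_of_forall_lt_one_mul_le fun c hc => ?_
    rcases eq_or_ne c 0 with rfl | hc0
    · simp
    have hctop : c ≠ ∞ := hc.ne_top
    set F : ℕ → Set (FiniteMeasure X) :=
      fun i => {μ ∈ E | ∀ j ≥ i, c ≤ ∫⁻ x, ρ j x ∂(μ : Measure X)} with hF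
    have hFmono : Monotone F := fun i i' hii' μ hμ =>
      ⟨hμ.1, fun j hj => hμ.2 j (le_trans hii' hj)⟩
    have hFunion : (⋃ i, F i) = E := by
      apply Set.Subset.antisymm (Set.iUnion_subset fun i μ hμ => hμ.1)
      intro μ hμ
      have hlim : c < Filter.liminf (fun j => ∫⁻ x, ρ j x ∂(μ : Measure X)) Filter.atTop :=
        lt_of_lt_of_le hc (hρ.2 μ hμ)
      have hev := Filter.eventually_lt_of_lt_liminf hlim
      obtain ⟨i, hi⟩ := Filter.eventually_atTop.1 hev
      exact Set.mem_iUnion.2 ⟨i, hμ, fun j hj => (hi j hj).le⟩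
    rw [h F hFmono hFunion, ENNReal.mul_iSup, Filter.liminf_eq_iSup_iInf_of_nat]
    refine iSup_le fun i => le_iSup_of_le i (le_iInf₂ fun j hj => ?_)
    -- c * Mmod 1 m (F i) ≤ ∫ ρ j ^ 1 dm
    have hmeas : Measurable (ρ j) := (hρ.1 j).measurable
    have hadm : AdmissibleFun (fun x => c⁻¹ * ρ j x) (F i) := by
      constructor
      · exact Continuous.comp_lowerSemicontinuous
          (ENNReal.continuous_const_mul (by simpa using hc0)) (hρ.1 j)
          (fun a b hab => mul_le_mul_right hab _)
      · intro μ hμ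
        rw [lintegral_const_mul _ hmeas]
        calc (1 : ℝ≥0∞) = c⁻¹ * c := (ENNReal.inv_mul_cancel hc0 hctop).symm
          _ ≤ c⁻¹ * ∫⁻ x, ρ j x ∂(μ : Measure X) := mul_le_mul_right (hμ.2 j hj) _
    have hle : Mmod 1 m (F i) ≤ ∫⁻ x, (c⁻¹ * ρ j x) ^ (1 : ℝ) ∂m := Mmod_le' 1 m hadm
    calc c * Mmod 1 m (F i) ≤ c * ∫⁻ x, (c⁻¹ * ρ j x) ^ (1 : ℝ) ∂m :=
          mul_le_mul_right hle _
      _ = ∫⁻ x, ρ j x ^ (1 : ℝ) ∂m := by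
          simp only [ENNReal.rpow_one]
          rw [lintegral_const_mul _ hmeas, ← mul_assoc,
            ENNReal.mul_inv_cancel hc0 hctop, one_mul]

end AMPaper

end
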